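/- Let (𝒳, Σ) be a measurable space, μ a probability measure on 𝒳, κ a Markov kernel from 𝒳 to ℝ (with the Borel σ-algebra), and let π = μ ⊗ₘ κ be the composition-product probability measure on 𝒳 × ℝ. Let A ⊆ ℝ be a Borel set with π(𝒳 × A) > 0, and let f : 𝒳 → ℝ be a bounded measurable function. Let ξ₁, ξ₂, … be an i.i.d. sequence of 𝒳-valued random variables with common distribution μ, defined on some probability space. Then, almost surely, (∑_{i=1}^{K} κ(ξᵢ, A)·f(ξᵢ)) / (∑_{i=1}^{K} κ(ξᵢ, A)) → (∫_{𝒳 × A} f(x) dπ(x, y)) / π(𝒳 × A) as K → ∞, i.e., the importance-sampling estimator with weights κ(·, A) converges almost surely to the conditional expectation E_π[f(X) | Y ∈ A]. -/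

import Mathlib

open MeasureTheory ProbabilityTheory Filter Topology

/-- Importance sampling with weights `κ(·, A)` converges almost surely to the
conditional expectation `E_π[f(X) | Y ∈ A]`, where `π = μ ⊗ₘ κ`. -/
theorem importance_sampling_conditional_event
    {𝒳 : Type*} [MeasurableSpace 𝒳] (μ : Measure 𝒳) [IsProbabilityMeasure μ]
    (κ : Kernel 𝒳 ℝ) [IsMarkovKernel κ]
    (A : Set ℝ) (hA : MeasurableSet A)
    (hApos : 0 < (μ ⊗ₘ κ) (Set.univ ×ˢ A))
    (f : 𝒳 → ℝ) (hf : Measurable f) (hfbdd : ∃ C : ℝ, ∀ x, |f x| ≤ C)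
    {Ω : Type*} [MeasurableSpace Ω] (P : Measure Ω) [IsProbabilityMeasure P]
    (ξ : ℕ → Ω → 𝒳) (hξm : ∀ i, Measurable (ξ i))
    (hindep : iIndepFun ξ P)
    (hident : ∀ i, P.map (ξ i) = μ) :
    ∀ᵐ ω ∂P, Tendsto
      (fun K : ℕ => (∑ i ∈ Finset.range K, (κ (ξ i ω) A).toReal * f (ξ i ω)) /
        ∑ i ∈ Finset.range K, (κ (ξ i ω) A).toReal)
      atTop
      (𝓝 ((∫ p in Set.univ ×ˢ A, f p.1 ∂(μ ⊗ₘ κ)) /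
        ((μ ⊗ₘ κ) (Set.univ ×ˢ A)).toReal)) := by
  obtain ⟨C, hC⟩ := hfbdd
  set w : 𝒳 → ℝ := fun x => (κ x A).toReal with hw
  set g : 𝒳 → ℝ := fun x => w x * f x with hg
  have hwm : Measurable w := (κ.measurable_coe hA).ennreal_toReal
  have hgm : Measurable g := hwm.mul hf
  have hw01 : ∀ x, 0 ≤ w x ∧ w x ≤ 1 := fun x => by
    constructor
    · exact ENNReal.toReal_nonneg
    · have : κ x A ≤ 1 := (measure_mono (Set.subset_univ _)).trans_eq (measure_univ)
      simpa using ENNReal.toReal_mono (by simp) this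
  have hne : Nonempty 𝒳 := by
    by_contra h
    rw [not_nonempty_iff] at h
    have h1 : μ Set.univ = 1 := measure_univ
    simp [Set.univ_eq_empty_iff.mpr h] at h1
  have hCnn : 0 ≤ C := le_trans (abs_nonneg _) (hC hne.some)
  -- integrability over μ
  have hwint : Integrable w μ := by
    refine ⟨hwm.aestronglyMeasurable, ?_⟩
    apply HasFiniteIntegral.of_bounded (C := 1)
    exact Eventually.of_forall fun x => by
      rw [Real.norm_eq_abs, abs_of_nonneg (hw01 x).1]; exact (hw01 x).2
  have hgint : Integrable g μ := by
    refine ⟨hgm.aestronglyMeasurable, ?_⟩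
    apply HasFiniteIntegral.of_bounded (C := C)
    refine Eventually.of_forall fun x => ?_
    rw [Real.norm_eq_abs, abs_mul, abs_of_nonneg (hw01 x).1]
    calc w x * |f x| ≤ 1 * C := mul_le_mul (hw01 x).2 (hC x) (abs_nonneg _) zero_le_one
    _ = C := one_mul C
  -- identify expectations
  have hident' : ∀ i, IdentDistrib (ξ i) (ξ 0) P P :=
    fun i => ⟨(hξm i).aemeasurable, (hξm 0).aemeasurable, by rw [hident i, hident 0]⟩
  have hmap0 : ∀ (h : 𝒳 → ℝ), Measurable h → ∫ ω, h (ξ 0 ω) ∂P = ∫ x, h x ∂μ := by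
    intro h hh
    rw [← hident 0, integral_map (hξm 0).aemeasurable hh.aestronglyMeasurable]
  -- SLLN for both sequences
  have slln : ∀ (h : 𝒳 → ℝ), Measurable h → Integrable h μ →
      ∀ᵐ ω ∂P, Tendsto (fun n : ℕ => (∑ i ∈ Finset.range n, h (ξ i ω)) / n) atTop
        (𝓝 (∫ x, h x ∂μ)) := by
    intro h hh hint
    have hint0 : Integrable (fun ω => h (ξ 0 ω)) P := by
      rw [← hident 0] at hint
      exact hint.comp_measurable (hξm 0)
    have := strong_law_ae_real (fun i ω => h (ξ i ω)) hint0
      (fun i j hij => (hindep.indepFun hij).comp hh hh)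
      (fun i => (hident' i).comp hh)
    rw [hmap0 h hh] at this
    exact this
  have hSg := slln g hgm hgint
  have hSw := slln w hwm hwint
  -- identify the limit constants
  have hb : ∫ x, w x ∂μ = ((μ ⊗ₘ κ) (Set.univ ×ˢ A)).toReal := by
    rw [Measure.compProd_apply_prod MeasurableSet.univ hA, Measure.restrict_univ]
    rw [integral_toReal (κ.measurable_coe hA).aemeasurable
      (Eventually.of_forall fun x => measure_lt_top _ _)]
  have hbpos : 0 < ∫ x, w x ∂μ := by
    rw [hb]
    exact ENNReal.toReal_pos hApos.ne' (measure_ne_top _ _)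
  have ha : ∫ p in Set.univ ×ˢ A, f p.1 ∂(μ ⊗ₘ κ) = ∫ x, g x ∂μ := by
    have hfint : IntegrableOn (fun p : 𝒳 × ℝ => f p.1) (Set.univ ×ˢ A) (μ ⊗ₘ κ) := by
      refine Integrable.integrableOn ⟨(hf.comp measurable_fst).aestronglyMeasurable, ?_⟩
      apply HasFiniteIntegral.of_bounded (C := C)
      exact Eventually.of_forall fun p => by rw [Real.norm_eq_abs]; exact hC p.1
    rw [Measure.setIntegral_compProd MeasurableSet.univ hA hfint, Measure.restrict_univ]
    congr 1 with x
    show (∫ _ in A, f x ∂κ x) = g x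
    rw [setIntegral_const, smul_eq_mul]
    rfl
  rw [ha, ← hb]
  filter_upwards [hSg, hSw] with ω hωg hωw
  have : Tendsto (fun n : ℕ => ((∑ i ∈ Finset.range n, g (ξ i ω)) / n) /
      ((∑ i ∈ Finset.range n, w (ξ i ω)) / n)) atTop
      (𝓝 ((∫ x, g x ∂μ) / (∫ x, w x ∂μ))) := hωg.div hωw hbpos.ne'
  refine this.congr' ?_
  filter_upwards [eventually_ge_atTop 1] with n hn
  rw [div_div_div_cancel_right₀ (by positivity : (n : ℝ) ≠ 0)]
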